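/- If L is a regular language over a one-letter alphabet Σ = {a}, then sc(root(L)) ≤ sc(L). -/
import Mathlib


/-- `root L` = words some positive power of which lies in `L`. -/
def root {A : Type} (L : Language A) : Language A :=
  {w | ∃ m : ℕ, 1 ≤ m ∧ (List.replicate m w).flatten ∈ L}

/-- A language is regular if some DFA with finitely many states recognizes it. -/
def IsReg {A : Type} (L : Language A) : Prop :=
  ∃ (σ : Type) (_ : Fintype σ) (M : DFA A σ), M.accepts = L

/-- The state complexity of a language: the least number of states of a DFA recognizing it. -/
noncomputable def sc {A : Type} (L : Language A) : ℕ :=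
  sInf {m | ∃ (σ : Type) (_ : Fintype σ) (M : DFA A σ), M.accepts = L ∧ Fintype.card σ = m}

lemma flatten_replicate_replicate {A : Type} (a : A) (m n : ℕ) :
    (List.replicate m (List.replicate n a)).flatten = List.replicate (m * n) a := by
  induction m with
  | zero => simp
  | succ k ih =>
    rw [List.replicate_succ, List.flatten_cons, ih, ← List.replicate_add]
    congr 1
    ring

/-- **Proposition 2.1 (bound).** For a regular language `L` over a one-letter alphabet,
`sc (root L) ≤ sc L`. -/
theorem proposition_2_1 {A : Type} [Fintype A] (hA : Fintype.card A = 1)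
    (L : Language A) (hreg : IsReg L) :
    sc (root L) ≤ sc L := by
  obtain ⟨a, ha⟩ := Fintype.card_eq_one_iff.mp hA
  have hne : {m | ∃ (σ : Type) (_ : Fintype σ) (M : DFA A σ),
      M.accepts = L ∧ Fintype.card σ = m}.Nonempty := by
    obtain ⟨σ, i, M, hM⟩ := hreg
    exact ⟨Fintype.card σ, σ, i, M, hM, rfl⟩
  obtain ⟨σ, i, M, hM, hcard⟩ := Nat.sInf_mem hne
  -- every word is a replicate of `a`
  have hw : ∀ w : List A, w = List.replicate w.length a := by
    intro w
    exact List.eq_replicate_length.mpr (fun b _ => ha b)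
  set f : ℕ → σ := fun n => M.eval (List.replicate n a) with hf
  have hstep : ∀ n, f (n + 1) = M.step (f n) a := by
    intro n
    show M.eval (List.replicate (n+1) a) = _
    rw [List.replicate_add]
    simp only [DFA.eval, DFA.evalFrom, List.foldl_append]
    rfl
  -- shift invariance
  have hshift : ∀ k d, f k = f (k + d) → ∀ j, f (k + j) = f (k + d + j) := by
    intro k d h j
    induction j with
    | zero => simpa using h
    | succ j ih => rw [← Nat.add_assoc, ← Nat.add_assoc, hstep, hstep, ih]
  have hper : ∀ k d, f k = f (k + d) → ∀ n, k ≤ n → ∀ t, f (n + t * d) = f n := by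
    intro k d h n hn t
    induction t with
    | zero => simp
    | succ t ih =>
      have h1 := hshift k d h (n - k + t * d)
      have e1 : k + (n - k + t * d) = n + t * d := by omega
      have e2 : k + d + (n - k + t * d) = n + (t + 1) * d := by
        have : (t + 1) * d = t * d + d := by ring
        omega
      rw [e1, e2] at h1
      rw [← h1]; exact ih
  -- key: equal states for lengths k ≤ k' give equal states for all positive multiples
  have hmul : ∀ k k', k ≤ k' → f k = f k' → ∀ m, 1 ≤ m → f (m * k') = f (m * k) := by
    intro k k' hkk h m hm
    obtain ⟨d, rfl⟩ := Nat.le.dest hkk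
    rw [Nat.mul_add]
    exact hper k d h (m * k) (Nat.le_mul_of_pos_left k hm) m
  have hkey : ∀ k k', f k = f k' →
      ((∃ m, 1 ≤ m ∧ f (m * k) ∈ M.accept) ↔ (∃ m, 1 ≤ m ∧ f (m * k') ∈ M.accept)) := by
    intro k k' h
    rcases Nat.le_total k k' with hle | hle
    · constructor
      · rintro ⟨m, hm, hacc⟩
        exact ⟨m, hm, by rw [hmul k k' hle h m hm]; exact hacc⟩
      · rintro ⟨m, hm, hacc⟩
        exact ⟨m, hm, by rw [← hmul k k' hle h m hm]; exact hacc⟩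
    · constructor
      · rintro ⟨m, hm, hacc⟩
        exact ⟨m, hm, by rw [← hmul k' k hle h.symm m hm]; exact hacc⟩
      · rintro ⟨m, hm, hacc⟩
        exact ⟨m, hm, by rw [hmul k' k hle h.symm m hm]; exact hacc⟩
  -- membership in root L in terms of f
  have hroot : ∀ n : ℕ, (List.replicate n a ∈ root L ↔ ∃ m, 1 ≤ m ∧ f (m * n) ∈ M.accept) := by
    intro n
    unfold root
    constructor
    · rintro ⟨m, hm, hmem⟩
      refine ⟨m, hm, ?_⟩
      rw [flatten_replicate_replicate, ← hM, DFA.mem_accepts] at hmem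
      exact hmem
    · rintro ⟨m, hm, hacc⟩
      refine ⟨m, hm, ?_⟩
      rw [flatten_replicate_replicate, ← hM, DFA.mem_accepts]
      exact hacc
  -- the new DFA
  set M' : DFA A σ :=
    ⟨M.step, M.start, {q | ∃ n : ℕ, f n = q ∧ List.replicate n a ∈ root L}⟩ with hM'
  have heval : ∀ w : List A, M'.eval w = M.eval w := fun w => rfl
  have hacc : M'.accepts = root L := by
    ext w
    rw [DFA.mem_accepts, heval]
    constructor
    · rintro ⟨n, hn, hmem⟩
      have hfn : f n = f w.length := by
        rw [hn]; conv_rhs => rw [hf]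
        simp only []
        congr 1
        exact hw w
      rw [hw w]
      rw [hroot]
      rw [hroot n] at hmem
      exact (hkey n w.length hfn).mp hmem
    · intro hmem
      refine ⟨w.length, ?_, ?_⟩
      · rw [hf]; simp only []; congr 1; exact (hw w).symm
      · rw [← hw w]; exact hmem
  calc sc (root L) ≤ Fintype.card σ := Nat.sInf_le ⟨σ, i, M', hacc, rfl⟩
    _ = sc L := hcard
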